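/- arXiv:0911.3503 — 2 statements merged into one kernel-verified Lean document; each statement's English description precedes it below -/
import Mathlib

section
/- Let A be a commutative noetherian local ring, let B be a finite set of μ monomials in x_1,...,x_n connected to 1, and let z = (z_{α,β})_{α∈∂B,β∈B} be coefficients in A with associated border relations h_α^z = x^α − Σ_{β∈B} z_{α,β} x^β for α ∈ ∂B. Then the quotient A[x_1,...,x_n]/(h_α^z : α ∈ ∂B) is a free A-module having the images of the monomials of B as a basis (i.e., the h_α^z are the border relations of a free quotient algebra of A[x_1,...,x_n] with basis B) if and only if the multiplication operators commute: M_{x_i}^z ∘ M_{x_j}^z = M_{x_j}^z ∘ M_{x_i}^z for all 1 ≤ i < j ≤ n. -/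
open MvPolynomial

noncomputable section

/-- A finite set `B` of monomials (given by their exponents) of `A[x_1, …, x_n]` is
connected to `1` if `1 ∈ B` and every monomial `m ∈ B \ {1}` equals `x_i · m'` for some
`m' ∈ B` and some `i`. -/
def ConnectedToOne {n : ℕ} (B : Finset (Fin n →₀ ℕ)) : Prop :=
  0 ∈ B ∧ ∀ β ∈ B, β ≠ 0 → ∃ β' ∈ B, ∃ i : Fin n, β = β' + Finsupp.single i 1

/-- `B⁺ = B ∪ x_1·B ∪ ⋯ ∪ x_n·B` (on exponents). -/
def borderPlus {n : ℕ} (B : Finset (Fin n →₀ ℕ)) : Finset (Fin n →₀ ℕ) :=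
  B ∪ Finset.univ.biUnion fun i : Fin n => B.image (· + Finsupp.single i 1)

/-- The border `∂B = B⁺ \ B`. -/
def border {n : ℕ} (B : Finset (Fin n →₀ ℕ)) : Finset (Fin n →₀ ℕ) :=
  borderPlus B \ B

/-- The border relation `h_α^z = x^α − Σ_{β ∈ B} z_{α,β} x^β`. -/
def borderRel {n : ℕ} {A : Type*} [CommRing A] (B : Finset (Fin n →₀ ℕ))
    (z : (Fin n →₀ ℕ) → (Fin n →₀ ℕ) → A) (α : Fin n →₀ ℕ) :
    MvPolynomial (Fin n) A :=
  monomial α (1 : A) - ∑ β ∈ B, C (z α β) * monomial β (1 : A)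

/-- The matrix, in the basis `B` of `⟨B⟩`, of the formal multiplication operator
`M_{x_i}^z : ⟨B⟩ → ⟨B⟩`, `M_{x_i}^z(x^β) = N^z(x_i · x^β)`, where `N^z` is the
projection on `⟨B⟩` determined by the border relations: `N^z(x^β) = x^β` for `β ∈ B`
and `N^z(x^α) = Σ_{β ∈ B} z_{α,β} x^β` for `α ∈ ∂B`. -/
def multMatrix {n : ℕ} {A : Type*} [CommRing A] (B : Finset (Fin n →₀ ℕ))
    (z : (Fin n →₀ ℕ) → (Fin n →₀ ℕ) → A) (i : Fin n) :
    Matrix B B A := fun β' β =>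
  if (β : Fin n →₀ ℕ) + Finsupp.single i 1 ∈ B then
    (if (β' : Fin n →₀ ℕ) = (β : Fin n →₀ ℕ) + Finsupp.single i 1 then 1 else 0)
  else z ((β : Fin n →₀ ℕ) + Finsupp.single i 1) β'

namespace BorderAux

variable {n : ℕ} {A : Type*} [CommRing A]
variable {B : Finset (Fin n →₀ ℕ)} {z : (Fin n →₀ ℕ) → (Fin n →₀ ℕ) → A}

lemma mem_border_add {β : Fin n →₀ ℕ} (hβ : β ∈ B) (i : Fin n)
    (h : β + Finsupp.single i 1 ∉ B) : β + Finsupp.single i 1 ∈ border B := by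
  simp only [border, Finset.mem_sdiff, borderPlus, Finset.mem_union, Finset.mem_biUnion,
    Finset.mem_image, Finset.mem_univ]
  exact ⟨Or.inr ⟨i, trivial, β, hβ, rfl⟩, h⟩

lemma border_cases {α : Fin n →₀ ℕ} (hα : α ∈ border B) :
    α ∉ B ∧ ∃ i : Fin n, ∃ β ∈ B, α = β + Finsupp.single i 1 := by
  simp only [border, Finset.mem_sdiff, borderPlus, Finset.mem_union, Finset.mem_biUnion,
    Finset.mem_image, Finset.mem_univ] at hα
  obtain ⟨h1, h2⟩ := hα
  refine ⟨h2, ?_⟩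
  rcases h1 with h | ⟨i, -, β, hβ, rfl⟩
  · exact absurd h h2
  · exact ⟨i, β, hβ, rfl⟩

def deg {n : ℕ} (β : Fin n →₀ ℕ) : ℕ := β.sum fun _ k => k

lemma deg_add_single (β : Fin n →₀ ℕ) (i : Fin n) :
    deg (β + Finsupp.single i 1) = deg β + 1 := by
  unfold deg
  rw [Finsupp.sum_add_index' (fun _ => rfl) (fun _ _ _ => rfl), Finsupp.sum_single_index rfl]

lemma eq_zero_of_deg_eq_zero {β : Fin n →₀ ℕ} (h : deg β = 0) : β = 0 := by
  unfold deg Finsupp.sum at h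
  rw [Finset.sum_eq_zero_iff] at h
  ext i
  by_cases hi : i ∈ β.support
  · exact h i hi
  · simpa using Finsupp.notMem_support_iff.mp hi

lemma monomial_add_single (β : Fin n →₀ ℕ) (i : Fin n) :
    monomial (β + Finsupp.single i 1) (1 : A) = X i * monomial β 1 := by
  rw [X, monomial_mul, one_mul, add_comm]

end BorderAux

end

noncomputable section
namespace BorderAux

variable {n : ℕ} {A : Type*} [CommRing A]
variable (B : Finset (Fin n →₀ ℕ)) (z : (Fin n →₀ ℕ) → (Fin n →₀ ℕ) → A)

local notation "I" => Ideal.span (borderRel B z '' (border B : Set (Fin n →₀ ℕ)))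

lemma quot_border {α : Fin n →₀ ℕ} (hα : α ∈ border B) :
    Ideal.Quotient.mk I (monomial α (1:A)) =
      ∑ β ∈ B, z α β • Ideal.Quotient.mk I (monomial β (1:A)) := by
  have hmem : borderRel B z α ∈ I :=
    Ideal.subset_span ⟨α, by exact_mod_cast hα, rfl⟩
  have h0 := Ideal.Quotient.eq_zero_iff_mem.mpr hmem
  rw [borderRel, map_sub, sub_eq_zero, map_sum] at h0
  rw [h0]
  refine Finset.sum_congr rfl fun β hβ => ?_
  rw [map_mul, ← MvPolynomial.algebraMap_eq, Ideal.Quotient.mk_algebraMap, ← Algebra.smul_def]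

lemma mk_smul (a : A) (p : MvPolynomial (Fin n) A) :
    Ideal.Quotient.mk I (a • p) = a • Ideal.Quotient.mk I p := by
  rw [smul_eq_C_mul, map_mul, ← MvPolynomial.algebraMap_eq, Ideal.Quotient.mk_algebraMap,
    ← Algebra.smul_def]

lemma forward (b : Module.Basis B A (MvPolynomial (Fin n) A ⧸ I))
    (hb : ∀ β : B, b β = Ideal.Quotient.mk I (monomial (β : Fin n →₀ ℕ) (1:A)))
    (i j : Fin n) :
    multMatrix B z i * multMatrix B z j = multMatrix B z j * multMatrix B z i := by
  classical
  have key : ∀ k : Fin n, Matrix.toLin b b (multMatrix B z k) =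
      LinearMap.mulLeft A (Ideal.Quotient.mk I (X k)) := by
    intro k
    refine b.ext fun β => ?_
    rw [Matrix.toLin_self, LinearMap.mulLeft_apply, hb β, ← map_mul,
      ← monomial_add_single (↑β) k]
    by_cases hmem : (β : Fin n →₀ ℕ) + Finsupp.single k 1 ∈ B
    · rw [← hb ⟨_, hmem⟩]
      rw [Finset.sum_eq_single (⟨(β : Fin n →₀ ℕ) + Finsupp.single k 1, hmem⟩ : B)]
      · simp [multMatrix, hmem]
      · intro β' _ hne
        have : (β' : Fin n →₀ ℕ) ≠ (β : Fin n →₀ ℕ) + Finsupp.single k 1 := by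
          simpa [Subtype.ext_iff] using hne
        simp [multMatrix, hmem, this]
      · simp
    · rw [quot_border B z (mem_border_add β.2 k hmem), ← Finset.sum_attach B
        (fun β' => z ((β : Fin n →₀ ℕ) + Finsupp.single k 1) β' •
          Ideal.Quotient.mk I (monomial β' (1:A)))]
      refine Finset.sum_congr rfl fun β' _ => ?_
      rw [hb β']
      simp [multMatrix, hmem]
  have key2 : ∀ k : Fin n, LinearMap.toMatrix b b
      (LinearMap.mulLeft A (Ideal.Quotient.mk I (X k))) = multMatrix B z k := by
    intro k
    rw [← key k, LinearMap.toMatrix_toLin]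
  have hcomp : ∀ k l : Fin n, multMatrix B z k * multMatrix B z l =
      LinearMap.toMatrix b b (LinearMap.mulLeft A (Ideal.Quotient.mk I (X k)) ∘ₗ
        LinearMap.mulLeft A (Ideal.Quotient.mk I (X l))) := by
    intro k l
    rw [LinearMap.toMatrix_comp b b b, key2, key2]
  rw [hcomp, hcomp]
  have hswap : LinearMap.mulLeft A (Ideal.Quotient.mk I (X i)) ∘ₗ
      LinearMap.mulLeft A (Ideal.Quotient.mk I (X j)) =
      LinearMap.mulLeft A (Ideal.Quotient.mk I (X j)) ∘ₗ
      LinearMap.mulLeft A (Ideal.Quotient.mk I (X i)) :=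
    LinearMap.ext fun q => by
      simp only [LinearMap.comp_apply, LinearMap.mulLeft_apply, mul_left_comm]
  rw [hswap]

set_option maxHeartbeats 2000000 in
lemma backward (hconn : ConnectedToOne B)
    (hcomm : ∀ i j : Fin n,
      multMatrix B z i * multMatrix B z j = multMatrix B z j * multMatrix B z i) :
    ∃ b : Module.Basis B A (MvPolynomial (Fin n) A ⧸ I),
      ∀ β : B, b β = Ideal.Quotient.mk I (monomial (β : Fin n →₀ ℕ) (1:A)) := by
  classical
  set M : Fin n → Matrix B B A := multMatrix B z with hM
  have hMc : ∀ a ∈ Set.range M, ∀ b ∈ Set.range M, a * b = b * a := by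
    rintro _ ⟨i, rfl⟩ _ ⟨j, rfl⟩; exact hcomm i j
  letI : CommRing (Algebra.adjoin A (Set.range M)) := Algebra.adjoinCommRingOfComm A hMc
  set ψ : MvPolynomial (Fin n) A →ₐ[A] Algebra.adjoin A (Set.range M) :=
    aeval (fun i => ⟨M i, Algebra.subset_adjoin ⟨i, rfl⟩⟩) with hψ
  set ψ' : MvPolynomial (Fin n) A →+* Matrix B B A :=
    ((Algebra.adjoin A (Set.range M)).val.comp ψ).toRingHom with hψ'
  have hψX : ∀ i : Fin n, ψ' (X i) = M i := by
    intro i; simp [hψ', hψ]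
  have hψC : ∀ a : A, ψ' (C a) = a • (1 : Matrix B B A) := by
    intro a
    simp [hψ', hψ, Algebra.algebraMap_eq_smul_one]
  set e0 : B → A := Pi.single (⟨0, hconn.1⟩ : B) 1 with he0
  set Φ : MvPolynomial (Fin n) A →ₗ[A] (B → A) :=
    { toFun := fun p => (ψ' p).mulVec e0
      map_add' := fun p q => by rw [map_add, Matrix.add_mulVec]
      map_smul' := fun a p => by
        rw [smul_eq_C_mul, map_mul, hψC, smul_mul_assoc, one_mul,
          Matrix.smul_mulVec, RingHom.id_apply] } with hΦ
  have hΦmul : ∀ p q : MvPolynomial (Fin n) A, Φ (p * q) = (ψ' p).mulVec (Φ q) := by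
    intro p q
    simp only [hΦ, LinearMap.coe_mk, AddHom.coe_mk, map_mul, Matrix.mulVec_mulVec]
  have hΦone : Φ 1 = e0 := by
    simp only [hΦ, LinearMap.coe_mk, AddHom.coe_mk, map_one, Matrix.one_mulVec]
  have hΦX : ∀ (i : Fin n) (p : MvPolynomial (Fin n) A),
      Φ (X i * p) = (M i).mulVec (Φ p) := fun i p => by rw [hΦmul, hψX]
  -- value of Φ on monomials of B
  have hmono : ∀ (N : ℕ) (β : Fin n →₀ ℕ) (hβ : β ∈ B), deg β ≤ N →
      Φ (monomial β 1) = Pi.single (⟨β, hβ⟩ : B) 1 := by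
    intro N
    induction N with
    | zero =>
      intro β hβ hd
      have h0 : β = 0 := eq_zero_of_deg_eq_zero (Nat.le_zero.mp hd)
      subst h0
      rw [monomial_zero', C_1, hΦone, he0]
    | succ N ih =>
      intro β hβ hd
      by_cases h0 : β = 0
      · subst h0
        rw [monomial_zero', C_1, hΦone, he0]
      · obtain ⟨β', hβ', i, heq⟩ := hconn.2 β hβ h0
        subst heq
        have hd' : deg β' ≤ N := by
          have := deg_add_single β' i
          omega
        rw [monomial_add_single, hΦX, ih β' hβ' hd', Matrix.mulVec_single]
        funext γ
        rw [MulOpposite.op_one, one_smul, Matrix.col_apply]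
        simp only [hM, multMatrix, hβ, if_pos]
        rw [Pi.single_apply]
        by_cases hγ : γ = (⟨β' + Finsupp.single i 1, hβ⟩ : B)
        · rw [if_pos hγ, if_pos (by rw [hγ])]
        · rw [if_neg hγ, if_neg (by simpa [Subtype.ext_iff] using hγ)]
  -- Φ kills the border relations
  have hborder : ∀ α ∈ border B, Φ (borderRel B z α) = 0 := by
    intro α hα
    obtain ⟨hnB, i, β₀, hβ₀, rfl⟩ := border_cases hα
    rw [borderRel, map_sub]
    have h1 : Φ (monomial (β₀ + Finsupp.single i 1) 1) =
        fun γ : B => z (β₀ + Finsupp.single i 1) ↑γ := by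
      rw [monomial_add_single, hΦX, hmono (deg β₀) β₀ hβ₀ le_rfl, Matrix.mulVec_single]
      funext γ
      rw [MulOpposite.op_one, one_smul, Matrix.col_apply]
      simp [hM, multMatrix, hnB]
    have h2 : Φ (∑ β ∈ B, C (z (β₀ + Finsupp.single i 1) β) * monomial β 1) =
        fun γ : B => z (β₀ + Finsupp.single i 1) ↑γ := by
      rw [map_sum, ← Finset.sum_attach B
        (fun β => Φ (C (z (β₀ + Finsupp.single i 1) β) * monomial β 1))]
      funext γ
      rw [Finset.sum_apply]
      have hterm : ∀ β : B, Φ (C (z (β₀ + Finsupp.single i 1) ↑β) * monomial (↑β) 1) γ =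
          if γ = β then z (β₀ + Finsupp.single i 1) ↑β else 0 := by
        intro β
        rw [← smul_eq_C_mul, map_smul,
          hmono (deg (β : Fin n →₀ ℕ)) ↑β β.2 le_rfl]
        simp [Pi.single_apply, Subtype.coe_eta, mul_ite]
      rw [Finset.sum_congr rfl fun β _ => hterm β]
      simp [Finset.sum_ite_eq, Finset.mem_attach]
    rw [h1, h2, sub_self]
  -- Φ kills the ideal
  have hideal : ∀ p ∈ I, Φ p = 0 := by
    intro p hp
    refine Submodule.span_induction ?_ ?_ ?_ ?_ hp
    · rintro x ⟨α, hα, rfl⟩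
      exact hborder α (by exact_mod_cast hα)
    · exact map_zero Φ
    · intro x y _ _ h1 h2
      rw [map_add, h1, h2, add_zero]
    · intro a x _ h1
      rw [smul_eq_mul, hΦmul, h1, Matrix.mulVec_zero]
  set v : B → MvPolynomial (Fin n) A ⧸ I :=
    fun β => Ideal.Quotient.mk I (monomial (β : Fin n →₀ ℕ) (1:A)) with hv
  -- linear independence
  have hli : LinearIndependent A v := by
    rw [Fintype.linearIndependent_iff]
    intro g hg β₀
    have hmem : (∑ β : B, g β • monomial (β : Fin n →₀ ℕ) (1:A)) ∈ I := by
      rw [← Ideal.Quotient.eq_zero_iff_mem, map_sum]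
      rw [Finset.sum_congr rfl (fun β _ => mk_smul B z (g β) (monomial (↑β) 1))]
      exact hg
    have := hideal _ hmem
    rw [map_sum] at this
    have heval := congrFun this β₀
    rw [Finset.sum_apply] at heval
    rw [Finset.sum_congr rfl (fun β _ => by
      rw [map_smul, hmono (deg (β : Fin n →₀ ℕ)) ↑β β.2 le_rfl])] at heval
    simpa [Pi.single_apply, Subtype.coe_eta, mul_ite, Finset.sum_ite_eq] using heval
  -- spanning
  have hsp : ⊤ ≤ Submodule.span A (Set.range v) := by
    set S := Submodule.span A (Set.range v) with hS
    have hXS : ∀ (i : Fin n), ∀ q ∈ S, Ideal.Quotient.mk I (X i) * q ∈ S := by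
      intro i q hq
      refine Submodule.span_induction ?_ ?_ ?_ ?_ hq
      · rintro x ⟨β, rfl⟩
        rw [hv, ← map_mul, ← monomial_add_single]
        by_cases hmem : (β : Fin n →₀ ℕ) + Finsupp.single i 1 ∈ B
        · exact Submodule.subset_span ⟨⟨_, hmem⟩, rfl⟩
        · rw [quot_border B z (mem_border_add β.2 i hmem), ← Finset.sum_attach B
            (fun β' => z ((β : Fin n →₀ ℕ) + Finsupp.single i 1) β' •
              Ideal.Quotient.mk I (monomial β' (1:A)))]
          exact Submodule.sum_mem _ fun β' _ =>
            Submodule.smul_mem _ _ (Submodule.subset_span ⟨β', rfl⟩)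
      · rw [mul_zero]; exact S.zero_mem
      · intro x y _ _ h1 h2
        rw [mul_add]; exact S.add_mem h1 h2
      · intro a x _ h1
        rw [mul_smul_comm]; exact S.smul_mem a h1
    have hmonoS : ∀ (N : ℕ) (γ : Fin n →₀ ℕ), deg γ ≤ N →
        Ideal.Quotient.mk I (monomial γ (1:A)) ∈ S := by
      intro N
      induction N with
      | zero =>
        intro γ hd
        have h0 : γ = 0 := eq_zero_of_deg_eq_zero (Nat.le_zero.mp hd)
        subst h0
        exact Submodule.subset_span ⟨⟨0, hconn.1⟩, rfl⟩
      | succ N ih =>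
        intro γ hd
        by_cases h0 : γ = 0
        · subst h0
          exact Submodule.subset_span ⟨⟨0, hconn.1⟩, rfl⟩
        · obtain ⟨i, hi⟩ : ∃ i, γ i ≠ 0 := by
            by_contra hc
            push_neg at hc
            exact h0 (Finsupp.ext hc)
          have heq : γ = (γ - Finsupp.single i 1) + Finsupp.single i 1 := by
            ext j
            simp only [Finsupp.add_apply, Finsupp.tsub_apply, Finsupp.single_apply]
            by_cases hj : i = j
            · subst hj
              simp
              have : 1 ≤ γ i := Nat.one_le_iff_ne_zero.mpr hi
              omega
            · simp [hj]
          have hd' : deg (γ - Finsupp.single i 1) ≤ N := by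
            have := deg_add_single (γ - Finsupp.single i 1) i
            rw [← heq] at this
            omega
          rw [heq, monomial_add_single, map_mul]
          exact hXS i _ (ih _ hd')
    intro q _
    obtain ⟨p, rfl⟩ := Ideal.Quotient.mk_surjective q
    rw [as_sum p, map_sum]
    refine Submodule.sum_mem _ fun γ hγ => ?_
    have : monomial γ (coeff γ p) = coeff γ p • monomial γ (1:A) := by
      rw [smul_monomial, smul_eq_mul, mul_one]
    rw [this, mk_smul B z]
    exact S.smul_mem _ (hmonoS (deg γ) γ le_rfl)
  refine ⟨Module.Basis.mk hli hsp, fun β => ?_⟩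
  rw [Module.Basis.mk_apply]

end BorderAux

/-- Theorem `thm:2.1`, after `BMnf99`.
Let `A` be a commutative noetherian local ring, `B` a set of `μ` monomials of
`A[x_1, …, x_n]` connected to `1`, and `z = (z_{α,β})` coefficients in `A` with border
relations `h_α^z = x^α − Σ_{β∈B} z_{α,β} x^β` (`α ∈ ∂B`).  Then the quotient
`A[x_1, …, x_n]/(h_α^z : α ∈ ∂B)` is a free `A`-module having the images of the
monomials of `B` as a basis if and only if the multiplication operators commute:
`M_{x_i}^z ∘ M_{x_j}^z = M_{x_j}^z ∘ M_{x_i}^z` for all `1 ≤ i < j ≤ n`. -/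


theorem border_basis_iff_commute {n : ℕ} {A : Type*} [CommRing A]
    [IsNoetherianRing A] [IsLocalRing A]
    (μ : ℕ) (B : Finset (Fin n →₀ ℕ)) (hcard : B.card = μ) (hconn : ConnectedToOne B)
    (z : (Fin n →₀ ℕ) → (Fin n →₀ ℕ) → A) :
    (∃ b : Module.Basis B A
        (MvPolynomial (Fin n) A ⧸ Ideal.span (borderRel B z '' (border B : Set (Fin n →₀ ℕ)))),
        ∀ β : B, b β =
          Ideal.Quotient.mk (Ideal.span (borderRel B z '' (border B : Set (Fin n →₀ ℕ))))
            (monomial (β : Fin n →₀ ℕ) (1 : A))) ↔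
      ∀ i j : Fin n, i < j →
        multMatrix B z i * multMatrix B z j = multMatrix B z j * multMatrix B z i := by
  constructor
  · rintro ⟨b, hb⟩ i j _
    exact BorderAux.forward B z b hb i j
  · intro h
    refine BorderAux.backward B z hconn fun i j => ?_
    rcases lt_trichotomy i j with hij | rfl | hij
    · exact h i j hij
    · rfl
    · exact (h j i hij).symm

end
end

section
/- Let A be a noetherian local K-algebra, T = A[x_0,...,x_n], and μ ≤ d integers. Let I_d ⊆ T_d and I_{d+1} ⊆ T_{d+1} be A-submodules such that Δ := T_d/I_d and Δ' := T_{d+1}/I_{d+1} are free A-modules of rank μ. Then T_1·I_d ⊆ I_{d+1} if and only if for every μ-tuple B of monomials of degree d, every (μ−1)-tuple B' of monomials of degree d+1, every monomial a of degree d, and every k ∈ {0,...,n}: Δ_B · Δ'_{(B',x_k·a)} − Σ_{b∈B} Δ_{B^{[b|a]}} · Δ'_{(B',x_k·b)} = 0, where Δ'_{(B',p)} is the Plücker coordinate in Δ' of the μ-tuple (b'_1,...,b'_{μ−1},p). -/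
open MvPolynomial

noncomputable section

/-- `T_d`: the `A`-submodule of homogeneous polynomials of degree `d`
in `T = A[x_0, …, x_n]`. -/
def homogComp (n : ℕ) (A : Type*) [CommRing A] (d : ℕ) :
    Submodule A (MvPolynomial (Fin (n + 1)) A) :=
  homogeneousSubmodule (Fin (n + 1)) A d

/-- The quotient `T_d / (N ∩ T_d)` for an `A`-submodule `N` of `T = A[x_0, …, x_n]`.
When `N ≤ T_d` this is the quotient of `T_d` by `N`. -/
def quotComp {n : ℕ} {A : Type*} [CommRing A]
    (N : Submodule A (MvPolynomial (Fin (n + 1)) A)) (d : ℕ) :=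
  homogComp n A d ⧸ N.comap (homogComp n A d).subtype

instance {n : ℕ} {A : Type*} [CommRing A]
    (N : Submodule A (MvPolynomial (Fin (n + 1)) A)) (d : ℕ) :
    AddCommGroup (quotComp N d) := by unfold quotComp; infer_instance

instance {n : ℕ} {A : Type*} [CommRing A]
    (N : Submodule A (MvPolynomial (Fin (n + 1)) A)) (d : ℕ) :
    Module A (quotComp N d) := by unfold quotComp; infer_instance

/-- The class in `T_d / (N ∩ T_d)` of (the degree-`d` homogeneous component of) a
polynomial `p`; for `p` homogeneous of degree `d` this is the class of `p`. -/
def cls {n : ℕ} {A : Type*} [CommRing A]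
    (N : Submodule A (MvPolynomial (Fin (n + 1)) A)) (d : ℕ)
    (p : MvPolynomial (Fin (n + 1)) A) : quotComp N d :=
  Submodule.Quotient.mk
    ⟨homogeneousComponent d p,
      (mem_homogeneousSubmodule _ _).2 (homogeneousComponent_isHomogeneous d p)⟩

/-- The Plücker coordinate `Δ_F = det (δ_i (p_j))` of a `μ`-tuple `F` of elements of a
free module `Δ` of rank `μ`, with respect to the dual basis `(δ_i)` of a basis `e`. -/
def plk {A : Type*} [CommRing A] {M : Type*} [AddCommGroup M] [Module A M] {μ : ℕ}
    (e : Module.Basis (Fin μ) A M) (F : Fin μ → M) : A :=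
  (Matrix.of fun i j => e.coord i (F j)).det

/-- The `μ`-tuple `(b'_1, …, b'_{μ−1}, p)` obtained by appending `p` to a
`(μ−1)`-tuple `B'`. -/
def snocTuple {μ : ℕ} {M : Type*} (B' : Fin (μ - 1) → M) (p : M) : Fin μ → M :=
  fun j => if h : (j : ℕ) < μ - 1 then B' ⟨j, h⟩ else p

namespace PlkAux

open Module

set_option linter.unusedSectionVars false

section Module

variable {A : Type*} [CommRing A] {M : Type*} [AddCommGroup M] [Module A M] {μ : ℕ}

lemma plk_eq_det (e : Basis (Fin μ) A M) (F : Fin μ → M) : plk e F = e.det F := rfl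

lemma plk_cramer (e : Basis (Fin μ) A M) (F : Fin μ → M) (a : M) :
    plk e F • a = ∑ j, plk e (Function.update F j a) • F j := by
  classical
  refine Basis.ext_elem e fun i => ?_
  have h := congrFun (Matrix.mulVec_cramer (e.toMatrix F) (fun i => e.repr a i)) i
  simp only [Matrix.mulVec, dotProduct, Pi.smul_apply, smul_eq_mul,
    Matrix.cramer_apply] at h
  have hupd : ∀ j, (e.toMatrix F).updateCol j (fun i => e.repr a i) =
      e.toMatrix (Function.update F j a) := by
    intro j
    rw [Basis.toMatrix_update]
  simp only [map_smul, map_sum, Finsupp.smul_apply, Finsupp.coe_finset_sum,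
    Finset.sum_apply, smul_eq_mul]
  rw [plk_eq_det, Basis.det_apply]
  calc (e.toMatrix F).det * e.repr a i
      = ∑ j, e.toMatrix F i j * ((e.toMatrix F).updateCol j fun i => e.repr a i).det :=
        h.symm
    _ = ∑ j, plk e (Function.update F j a) * e.repr (F j) i := by
        refine Finset.sum_congr rfl fun j _ => ?_
        rw [hupd j, plk_eq_det, Basis.det_apply, Basis.toMatrix_apply, mul_comm]

lemma snoc_last (hμ : 0 < μ) (v : Fin (μ - 1) → M) (z w : M) :
    snocTuple v z = Function.update (snocTuple v w) ⟨μ - 1, by omega⟩ z := by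
  funext j
  by_cases hj : (j : ℕ) < μ - 1
  · have hne : j ≠ ⟨μ - 1, by omega⟩ := Fin.ne_of_val_ne (show (j : ℕ) ≠ μ - 1 by omega)
    simp only [snocTuple, Function.update_apply, if_neg hne, dif_pos hj]
  · have heq : j = ⟨μ - 1, by omega⟩ := Fin.ext (show (j : ℕ) = μ - 1 by have := j.2; omega)
    simp only [snocTuple, Function.update_apply, if_pos heq, dif_neg hj]

lemma snoc_update (hμ : 0 < μ) (v : Fin (μ - 1) → M) (z w : M) (t : Fin (μ - 1)) :
    snocTuple (Function.update v t w) z =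
      Function.update (snocTuple v z) ⟨(t : ℕ), by omega⟩ w := by
  classical
  funext j
  by_cases hj : (j : ℕ) < μ - 1
  · by_cases hjt : (j : ℕ) = (t : ℕ)
    · have h1 : (⟨(j : ℕ), hj⟩ : Fin (μ - 1)) = t := Fin.ext hjt
      have h2 : j = (⟨(t : ℕ), by omega⟩ : Fin μ) := Fin.ext hjt
      simp only [snocTuple, Function.update_apply, dif_pos hj, if_pos h1, if_pos h2]
    · have h1 : (⟨(j : ℕ), hj⟩ : Fin (μ - 1)) ≠ t := fun hh => hjt (by rw [← hh])
      have h2 : j ≠ (⟨(t : ℕ), by omega⟩ : Fin μ) := Fin.ne_of_val_ne hjt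
      simp only [snocTuple, Function.update_apply, dif_pos hj, if_neg h1, if_neg h2]
  · have h2 : j ≠ (⟨(t : ℕ), by omega⟩ : Fin μ) := Fin.ne_of_val_ne
      (show (j : ℕ) ≠ (t : ℕ) by have := t.2; omega)
    simp only [snocTuple, Function.update_apply, if_neg h2, dif_neg hj]

/-- The determinant against a basis, with the last slot of `snocTuple` as a linear map. -/
def detSnocLM (hμ : 0 < μ) (e' : Basis (Fin μ) A M) (v : Fin (μ - 1) → M) : M →ₗ[A] A :=
  e'.det.toMultilinearMap.toLinearMap (snocTuple v 0) ⟨μ - 1, by omega⟩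

lemma detSnocLM_apply (hμ : 0 < μ) (e' : Basis (Fin μ) A M) (v : Fin (μ - 1) → M) (z : M) :
    detSnocLM hμ e' v z = e'.det (snocTuple v z) := by
  show e'.det (Function.update (snocTuple v 0) ⟨μ - 1, by omega⟩ z) = e'.det (snocTuple v z)
  rw [← snoc_last hμ]

lemma plk_snoc (hμ : 0 < μ) (e' : Basis (Fin μ) A M) (v : Fin (μ - 1) → M) (z : M) :
    plk e' (snocTuple v z) = detSnocLM hμ e' v z := by
  rw [plk_eq_det, detSnocLM_apply]

/-- The determinant with one slot replaced, as a linear map. -/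
def detUpdLM (e : Basis (Fin μ) A M) (F : Fin μ → M) (t : Fin μ) : M →ₗ[A] A :=
  e.det.toMultilinearMap.toLinearMap F t

lemma plk_update (e : Basis (Fin μ) A M) (F : Fin μ → M) (t : Fin μ) (x : M) :
    plk e (Function.update F t x) = detUpdLM e F t x := by
  rw [plk_eq_det]; rfl

lemma eq_zero_of_forall_det_snoc (hμ : 0 < μ) (e' : Basis (Fin μ) A M) {z : M}
    (h : ∀ v : Fin (μ - 1) → M, e'.det (snocTuple v z) = 0) : z = 0 := by
  classical
  rw [Basis.ext_elem_iff e']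
  intro i
  rw [map_zero, Finsupp.zero_apply]
  set l : Fin μ := ⟨μ - 1, by omega⟩ with hl
  set σ : Equiv.Perm (Fin μ) := Equiv.swap i l with hσ
  set v : Fin (μ - 1) → M := fun t => e' (σ ⟨(t : ℕ), lt_of_lt_of_le t.2 (Nat.sub_le μ 1)⟩)
    with hv
  have hsnoc : snocTuple v z = Function.update (⇑e' ∘ σ) l z := by
    funext j
    by_cases hj : (j : ℕ) < μ - 1
    · have hne : j ≠ l := hl ▸ Fin.ne_of_val_ne (show (j : ℕ) ≠ μ - 1 by omega)
      rw [Function.update_of_ne hne]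
      simp only [snocTuple, dif_pos hj, hv, Function.comp_apply]
    · have heq : j = l := hl ▸ Fin.ext (show (j : ℕ) = μ - 1 by have := j.2; omega)
      rw [heq, Function.update_self]
      simp only [snocTuple, hl]
      rw [dif_neg (by omega)]
  have h0 := h v
  rw [hsnoc] at h0
  have hz : z = ∑ j, e'.repr z j • e' j := (Basis.sum_repr e' z).symm
  set L : M →ₗ[A] A := e'.det.toMultilinearMap.toLinearMap (⇑e' ∘ σ) l with hL
  have hLapp : ∀ x, L x = e'.det (Function.update (⇑e' ∘ σ) l x) := fun _ => rfl
  have h1 : L z = 0 := by rw [hLapp]; exact h0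
  rw [hz, map_sum] at h1
  have hterm : ∀ j ∈ Finset.univ, j ≠ i → L (e'.repr z j • e' j) = 0 := by
    intro j _ hj
    rw [map_smul, smul_eq_mul, hLapp]
    have hσj : σ j ≠ l := by
      intro hh
      apply hj
      have h2 : σ (σ j) = σ l := by rw [hh]
      rwa [Equiv.swap_apply_self, Equiv.swap_apply_right] at h2
    have heq : Function.update (⇑e' ∘ σ) l (e' j) (σ j) =
        Function.update (⇑e' ∘ σ) l (e' j) l := by
      rw [Function.update_of_ne hσj, Function.update_self, Function.comp_apply,
        Equiv.swap_apply_self]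
    rw [e'.det.map_eq_zero_of_eq _ heq hσj, mul_zero]
  rw [Finset.sum_eq_single_of_mem i (Finset.mem_univ i) hterm] at h1
  rw [map_smul, smul_eq_mul, hLapp] at h1
  have hupd : Function.update (⇑e' ∘ σ) l (e' i) = ⇑e' ∘ σ := by
    funext s
    by_cases hs : s = l
    · rw [hs, Function.update_self, Function.comp_apply, Equiv.swap_apply_right]
    · rw [Function.update_of_ne hs]
  rw [hupd, e'.det.map_perm, Basis.det_self] at h1
  rcases Int.units_eq_one_or (Equiv.Perm.sign σ) with hs | hs <;> rw [hs] at h1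
  · simpa using h1
  · have hneg : ((-1 : ℤˣ) • (1 : A)) = -(1 : A) := by simp
    rw [hneg] at h1
    simpa using h1

lemma det_snoc_extend (hμ : 0 < μ) (e' : Basis (Fin μ) A M) {S : Set M}
    (hS : Submodule.span A S = ⊤) {z : M}
    (h : ∀ v : Fin (μ - 1) → M, (∀ t, v t ∈ S) → e'.det (snocTuple v z) = 0) :
    ∀ v : Fin (μ - 1) → M, e'.det (snocTuple v z) = 0 := by
  classical
  suffices H : ∀ m : ℕ, m ≤ μ - 1 → ∀ v : Fin (μ - 1) → M,
      (∀ t : Fin (μ - 1), m ≤ (t : ℕ) → v t ∈ S) → e'.det (snocTuple v z) = 0 by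
    intro v
    exact H (μ - 1) le_rfl v (fun t ht => absurd t.2 (by omega))
  intro m
  induction m with
  | zero => exact fun _ v hv => h v fun t => hv t (Nat.zero_le _)
  | succ m ih =>
    intro hm v hv
    have hmlt : m < μ - 1 := by omega
    have hrw : ∀ w, snocTuple (Function.update v ⟨m, hmlt⟩ w) z =
        Function.update (snocTuple v z) ⟨m, by omega⟩ w := fun w => snoc_update hμ v z w _
    have key : ∀ w ∈ Submodule.span A S,
        e'.det (snocTuple (Function.update v ⟨m, hmlt⟩ w) z) = 0 := by
      intro w hw
      induction hw using Submodule.span_induction with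
      | mem y hy =>
        refine ih (by omega) _ fun t ht => ?_
        by_cases htt : t = ⟨m, hmlt⟩
        · rw [htt, Function.update_self]; exact hy
        · rw [Function.update_of_ne htt]
          refine hv t ?_
          have : (t : ℕ) ≠ m := fun hh => htt (Fin.ext hh)
          omega
      | zero =>
        rw [hrw]
        exact e'.det.map_update_zero _ _
      | add x y _ _ hx hy =>
        rw [hrw] at hx hy ⊢
        rw [e'.det.map_update_add, hx, hy, add_zero]
      | smul c x _ hx =>
        rw [hrw] at hx ⊢
        rw [e'.det.map_update_smul, hx, smul_zero]
    have hfin := key (v ⟨m, hmlt⟩) (by rw [hS]; trivial)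
    rwa [Function.update_eq_self] at hfin

end Module

section Poly

variable {A : Type*} [CommRing A] {n : ℕ}
  (N : Submodule A (MvPolynomial (Fin (n + 1)) A)) (d : ℕ)

/-- `cls` as a linear map. -/
def clsLM : MvPolynomial (Fin (n + 1)) A →ₗ[A] quotComp N d :=
  (N.comap (homogComp n A d).subtype).mkQ ∘ₗ
    LinearMap.codRestrict (homogComp n A d) (homogeneousComponent d)
      (fun p => (mem_homogeneousSubmodule _ _).2 (homogeneousComponent_isHomogeneous d p))

lemma cls_eq_clsLM (p : MvPolynomial (Fin (n + 1)) A) : cls N d p = clsLM N d p := rfl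

variable {N d}

lemma cls_of_mem {p : MvPolynomial (Fin (n + 1)) A} (hp : p ∈ homogComp n A d) :
    cls N d p = Submodule.Quotient.mk ⟨p, hp⟩ := by
  have h : homogeneousComponent d p = p := by
    rw [homogeneousComponent_of_mem hp, if_pos rfl]
  unfold cls
  congr 1
  exact Subtype.ext h

lemma cls_eq_zero_iff {p : MvPolynomial (Fin (n + 1)) A} (hp : p ∈ homogComp n A d) :
    cls N d p = 0 ↔ p ∈ N := by
  rw [cls_of_mem hp]
  refine (Submodule.Quotient.mk_eq_zero (p := N.comap (homogComp n A d).subtype)).trans ?_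
  simp [Submodule.mem_comap]

lemma mem_homogComp_monomial {a : Fin (n + 1) →₀ ℕ} (ha : a.degree = d) (c : A) :
    (monomial a c : MvPolynomial (Fin (n + 1)) A) ∈ homogComp n A d :=
  (mem_homogeneousSubmodule _ _).2 (isHomogeneous_monomial c ha)

lemma support_degree {p : MvPolynomial (Fin (n + 1)) A} (hp : p ∈ homogComp n A d)
    {a : Fin (n + 1) →₀ ℕ} (ha : a ∈ p.support) : a.degree = d := by
  have h := (mem_homogeneousSubmodule _ _).1 hp
  rw [DFunLike.congr_fun Finsupp.degree_eq_weight_one a]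
  exact h (mem_support_iff.1 ha)

lemma cls_decomp {p : MvPolynomial (Fin (n + 1)) A} (hp : p ∈ homogComp n A d) :
    cls N d p = ∑ a ∈ p.support, coeff a p • cls N d (monomial a 1) := by
  conv_lhs => rw [cls_eq_clsLM, ← support_sum_monomial_coeff p]
  rw [map_sum]
  refine Finset.sum_congr rfl fun a _ => ?_
  rw [cls_eq_clsLM, ← map_smul]
  congr 1
  rw [smul_monomial, smul_eq_mul, mul_one]

lemma span_cls_monomials :
    Submodule.span A {z : quotComp N d |
      ∃ a : Fin (n + 1) →₀ ℕ, a.degree = d ∧ z = cls N d (monomial a 1)} = ⊤ := by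
  rw [Submodule.eq_top_iff']
  intro z
  obtain ⟨⟨p, hp⟩, rfl⟩ := Submodule.Quotient.mk_surjective _ z
  rw [← cls_of_mem hp, cls_decomp hp]
  exact Submodule.sum_mem _ fun a ha => Submodule.smul_mem _ _
    (Submodule.subset_span ⟨a, support_degree hp ha, rfl⟩)

lemma degree_one_exists {m : Fin (n + 1) →₀ ℕ} (hm : m.degree = 1) :
    ∃ k, m = Finsupp.single k 1 := by
  have hne : m ≠ 0 := by
    intro h
    rw [h, map_zero] at hm
    exact one_ne_zero hm.symm
  obtain ⟨k, hk⟩ := Finsupp.support_nonempty_iff.2 hne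
  have hk1 : m k = 1 := by
    have h1 := Finsupp.le_degree k m
    have h2 : 1 ≤ m k := Nat.one_le_iff_ne_zero.2 (Finsupp.mem_support_iff.1 hk)
    omega
  refine ⟨k, Finsupp.ext fun j => ?_⟩
  rcases eq_or_ne j k with rfl | hj
  · rw [hk1, Finsupp.single_eq_same]
  · rw [Finsupp.single_eq_of_ne' (Ne.symm hj)]
    by_contra hne0
    have hjsupp : j ∈ m.support := Finsupp.mem_support_iff.2 hne0
    have hsum : m k + ∑ x ∈ m.support.erase k, m x = m.degree := Finset.add_sum_erase _ _ hk
    have hjmem : j ∈ m.support.erase k := Finset.mem_erase.2 ⟨hj, hjsupp⟩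
    have hle : m j ≤ ∑ x ∈ m.support.erase k, m x :=
      Finset.single_le_sum (fun _ _ => Nat.zero_le _) hjmem
    have hmj : 1 ≤ m j := Nat.one_le_iff_ne_zero.2 hne0
    omega

lemma X_mul_monomial_one (k : Fin (n + 1)) (a : Fin (n + 1) →₀ ℕ) :
    (X k : MvPolynomial (Fin (n + 1)) A) * monomial a 1 =
      monomial (Finsupp.single k 1 + a) 1 := by
  rw [X, monomial_mul, one_mul]

lemma degree_single_add {k : Fin (n + 1)} {a : Fin (n + 1) →₀ ℕ} (ha : a.degree = d) :
    (Finsupp.single k 1 + a).degree = d + 1 := by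
  have hd : ∀ m : Fin (n + 1) →₀ ℕ, m.degree = Finsupp.weight 1 m :=
    fun m => DFunLike.congr_fun Finsupp.degree_eq_weight_one m
  have hs : (Finsupp.single k 1 : Fin (n + 1) →₀ ℕ).degree = 1 := by
    exact Finsupp.degree_single k 1
  rw [hd, map_add, ← hd, ← hd, ha, hs, add_comm]

lemma X_mul_mem_homogComp {k : Fin (n + 1)} {a : Fin (n + 1) →₀ ℕ} (ha : a.degree = d) :
    (X k : MvPolynomial (Fin (n + 1)) A) * monomial a 1 ∈ homogComp n A (d + 1) := by
  rw [X_mul_monomial_one]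
  exact mem_homogComp_monomial (degree_single_add ha) 1

end Poly

section LocalRing

variable {A : Type*} [CommRing A] [IsLocalRing A] {n : ℕ}

lemma exists_unit_plk {μ : ℕ} (N : Submodule A (MvPolynomial (Fin (n + 1)) A))
    (d : ℕ) (e : Basis (Fin μ) A (quotComp N d)) :
    ∃ B : Fin μ → (Fin (n + 1) →₀ ℕ), (∀ t, (B t).degree = d) ∧
      IsUnit (plk e fun t => cls N d (monomial (B t) (1 : A))) := by
  classical
  set κ := IsLocalRing.ResidueField A with hκ
  set r : A →+* κ := IsLocalRing.residue A with hr
  set φ : quotComp N d → (Fin μ → κ) := fun x i => r (e.repr x i) with hφ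
  set S : Set (quotComp N d) :=
    {z | ∃ a : Fin (n + 1) →₀ ℕ, a.degree = d ∧ z = cls N d (monomial a 1)} with hS
  have hspan : Submodule.span A S = ⊤ := span_cls_monomials
  have hφ_mem : ∀ x ∈ Submodule.span A S, φ x ∈ Submodule.span κ (φ '' S) := by
    intro x hx
    induction hx using Submodule.span_induction with
    | mem y hy => exact Submodule.subset_span ⟨y, hy, rfl⟩
    | zero =>
      have h0 : φ 0 = 0 := by funext i; simp [hφ]
      rw [h0]; exact Submodule.zero_mem _
    | add x y _ _ hx hy =>
      have hadd : φ (x + y) = φ x + φ y := by funext i; simp [hφ]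
      rw [hadd]; exact Submodule.add_mem _ hx hy
    | smul c x _ hx =>
      have hsmul : φ (c • x) = r c • φ x := by
        funext i
        simp [hφ, Finsupp.smul_apply, smul_eq_mul, map_mul]
      rw [hsmul]
      exact Submodule.smul_of_tower_mem _ _ hx
  have htop : Submodule.span κ (φ '' S) = ⊤ := by
    have hsingle : ∀ i, φ (e i) = Pi.single i (1 : κ) := by
      intro i
      funext j
      simp only [hφ, Basis.repr_self]
      rw [Finsupp.single_apply, Pi.single_apply]
      split_ifs with h1 h2 h2
      · exact map_one r
      · exact absurd h1.symm h2
      · exact absurd h2.symm h1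
      · exact map_zero r
    refine le_antisymm le_top ?_
    rw [← (Pi.basisFun κ (Fin μ)).span_eq]
    refine Submodule.span_le.2 ?_
    rintro _ ⟨i, rfl⟩
    rw [Pi.basisFun_apply, ← hsingle i]
    exact hφ_mem _ (by rw [hspan]; trivial)
  obtain ⟨t, hts, htspan, htli⟩ := exists_linearIndependent κ (φ '' S)
  have hbspan : Submodule.span κ t = ⊤ := by rw [htspan, htop]
  let b : Basis t κ (Fin μ → κ) := Basis.mk htli (by rw [Subtype.range_coe, hbspan])
  have : Fintype t := FiniteDimensional.fintypeBasisIndex b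
  have hcard : Fintype.card t = μ := by
    have h1 := Module.finrank_eq_card_basis b
    rw [Module.finrank_fin_fun] at h1
    exact h1.symm
  let g : Fin μ ≃ t := (Fintype.equivFinOfCardEq hcard).symm
  have hw : ∀ j : Fin μ, ∃ a : Fin (n + 1) →₀ ℕ,
      a.degree = d ∧ ((g j : Fin μ → κ)) = φ (cls N d (monomial a 1)) := by
    intro j
    obtain ⟨z, hz, hφz⟩ := hts (g j).2
    obtain ⟨a, ha, rfl⟩ := hz
    exact ⟨a, ha, hφz.symm⟩
  choose B hBdeg hBeq using hw
  refine ⟨B, hBdeg, ?_⟩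
  set F : Fin μ → quotComp N d := fun s => cls N d (monomial (B s) 1) with hF
  have hdet : r (plk e F) = (Pi.basisFun κ (Fin μ)).det fun j => ((g j : Fin μ → κ)) := by
    unfold plk
    rw [RingHom.map_det, Basis.det_apply]
    congr 1
    ext i j
    rw [RingHom.mapMatrix_apply, Matrix.map_apply, Matrix.of_apply, Basis.toMatrix_apply,
      Pi.basisFun_repr, hBeq j]
    rfl
  have hUnit : IsUnit ((Pi.basisFun κ (Fin μ)).det fun j => ((g j : Fin μ → κ))) := by
    have hcoe : (fun j => ((g j : Fin μ → κ))) = ⇑(b.reindex g.symm) := by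
      funext j
      rw [Basis.reindex_apply, Equiv.symm_symm]
      rw [show b (g j) = ((g j : Fin μ → κ)) from Basis.mk_apply _ _ _]
    rw [hcoe]
    exact Basis.isUnit_det _ _
  rw [← hdet] at hUnit
  exact isUnit_of_map_unit r _ hUnit

end LocalRing

end PlkAux

/-- equations `(3.1)` cutting out `W`, from Theorem after
Lemma `lemma:plucker:coord`.
Let `A` be a noetherian local `K`-algebra, `T = A[x_0, …, x_n]`, `μ ≤ d` positive
integers, and `I_d ⊆ T_d`, `I_{d+1} ⊆ T_{d+1}` `A`-submodules with `Δ = T_d/I_d` and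
`Δ' = T_{d+1}/I_{d+1}` free of rank `μ`.  Then `T_1 · I_d ⊆ I_{d+1}` iff for all
`μ`-tuples `B` of monomials of degree `d`, all `(μ−1)`-tuples `B'` of monomials of
degree `d+1`, every monomial `a` of degree `d` and every `k ∈ {0, …, n}`:
`Δ_B · Δ'_{(B', x_k a)} − Σ_{b ∈ B} Δ_{B^{[b|a]}} · Δ'_{(B', x_k b)} = 0`. -/
theorem mulT1_le_iff_plucker {K : Type*} [Field K] [IsAlgClosed K] [CharZero K]
    {A : Type*} [CommRing A] [Algebra K A] [IsNoetherianRing A] [IsLocalRing A]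
    {n μ d : ℕ} (hμ : 0 < μ) (hμd : μ ≤ d)
    (Id Id1 : Submodule A (MvPolynomial (Fin (n + 1)) A))
    (hId : Id ≤ homogComp n A d) (hId1 : Id1 ≤ homogComp n A (d + 1))
    (e : Module.Basis (Fin μ) A (quotComp Id d))
    (e' : Module.Basis (Fin μ) A (quotComp Id1 (d + 1))) :
    (∀ ℓ ∈ homogComp n A 1, ∀ f ∈ Id, ℓ * f ∈ Id1) ↔
      ∀ (B : Fin μ → (Fin (n + 1) →₀ ℕ)), (∀ t, (B t).degree = d) →
      ∀ (B' : Fin (μ - 1) → (Fin (n + 1) →₀ ℕ)), (∀ t, (B' t).degree = d + 1) →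
      ∀ (a : Fin (n + 1) →₀ ℕ), a.degree = d →
      ∀ k : Fin (n + 1),
        plk e (fun t => cls Id d (monomial (B t) (1 : A))) *
            plk e' (snocTuple (fun t => cls Id1 (d + 1) (monomial (B' t) (1 : A)))
              (cls Id1 (d + 1) (X k * monomial a (1 : A)))) -
          ∑ t : Fin μ,
            plk e (Function.update (fun s => cls Id d (monomial (B s) (1 : A))) t
                (cls Id d (monomial a (1 : A)))) *
              plk e' (snocTuple (fun s => cls Id1 (d + 1) (monomial (B' s) (1 : A)))
                (cls Id1 (d + 1) (X k * monomial (B t) (1 : A)))) = 0 := by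
  classical
  constructor
  · -- forward direction
    intro hmul B hB B' hB' a ha k
    set Fc : Fin μ → quotComp Id d := fun t => cls Id d (monomial (B t) (1 : A)) with hFc
    set ca : quotComp Id d := cls Id d (monomial a (1 : A)) with hca
    set g : MvPolynomial (Fin (n + 1)) A :=
      plk e Fc • monomial a (1 : A) -
        ∑ t : Fin μ, plk e (Function.update Fc t ca) • monomial (B t) (1 : A) with hg
    have hg_mem : g ∈ homogComp n A d := by
      refine Submodule.sub_mem _
        (Submodule.smul_mem _ _ (PlkAux.mem_homogComp_monomial ha 1))
        (Submodule.sum_mem _ fun t _ =>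
          Submodule.smul_mem _ _ (PlkAux.mem_homogComp_monomial (hB t) 1))
    have hg_cls : cls Id d g = 0 := by
      have hsplit : cls Id d g = plk e Fc • ca -
          ∑ t : Fin μ, plk e (Function.update Fc t ca) • Fc t := by
        rw [PlkAux.cls_eq_clsLM, hg, map_sub, map_smul, map_sum]
        simp only [map_smul]
        rfl
      rw [hsplit, PlkAux.plk_cramer e Fc ca, sub_self]
    have hgId : g ∈ Id := (PlkAux.cls_eq_zero_iff hg_mem).1 hg_cls
    have hX1 : (X k : MvPolynomial (Fin (n + 1)) A) ∈ homogComp n A 1 :=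
      (mem_homogeneousSubmodule _ _).2 (isHomogeneous_X _ k)
    have hXg : X k * g ∈ Id1 := hmul (X k) hX1 g hgId
    have hXg_mem : X k * g ∈ homogComp n A (d + 1) := by
      have h1 := (isHomogeneous_X A k).mul ((mem_homogeneousSubmodule _ _).1 hg_mem)
      rw [Nat.add_comm 1 d] at h1
      exact (mem_homogeneousSubmodule _ _).2 h1
    have hclsXg : cls Id1 (d + 1) (X k * g) = 0 := (PlkAux.cls_eq_zero_iff hXg_mem).2 hXg
    have hexp : cls Id1 (d + 1) (X k * g) =
        plk e Fc • cls Id1 (d + 1) (X k * monomial a (1 : A)) -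
          ∑ t : Fin μ, plk e (Function.update Fc t ca) •
            cls Id1 (d + 1) (X k * monomial (B t) (1 : A)) := by
      have hXgexp : X k * g = plk e Fc • (X k * monomial a (1 : A)) -
          ∑ t : Fin μ, plk e (Function.update Fc t ca) • (X k * monomial (B t) (1 : A)) := by
        rw [hg, mul_sub, Finset.mul_sum]
        simp only [mul_smul_comm]
      rw [hXgexp, PlkAux.cls_eq_clsLM, map_sub, map_smul, map_sum]
      simp only [map_smul]
      rfl
    set B'c : Fin (μ - 1) → quotComp Id1 (d + 1) :=
      fun t => cls Id1 (d + 1) (monomial (B' t) (1 : A)) with hB'c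
    have hrwz : ∀ z, plk e' (snocTuple B'c z) = PlkAux.detSnocLM hμ e' B'c z :=
      fun z => PlkAux.plk_snoc hμ e' B'c z
    simp only [hrwz]
    have h2 : PlkAux.detSnocLM hμ e' B'c (cls Id1 (d + 1) (X k * g)) = 0 := by
      rw [hclsXg, map_zero]
    rw [hexp, map_sub, map_smul, map_sum] at h2
    simp only [map_smul, smul_eq_mul] at h2
    exact h2
  · -- backward direction
    intro hrel ℓ hℓ f hf
    have hfd : f ∈ homogComp n A d := hId hf
    rw [show ℓ = ∑ m ∈ ℓ.support, monomial m (coeff m ℓ) from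
      (support_sum_monomial_coeff ℓ).symm, Finset.sum_mul]
    refine Submodule.sum_mem _ fun m hm => ?_
    obtain ⟨k, hk⟩ := PlkAux.degree_one_exists (PlkAux.support_degree hℓ hm)
    have hmm : (monomial m (coeff m ℓ) : MvPolynomial (Fin (n + 1)) A) * f =
        coeff m ℓ • ((X k) * f) := by
      rw [show (monomial m (coeff m ℓ) : MvPolynomial (Fin (n + 1)) A) =
        coeff m ℓ • X k from by rw [X, smul_monomial, smul_eq_mul, mul_one, hk], smul_mul_assoc]
    rw [hmm]
    refine Submodule.smul_mem _ _ ?_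
    -- main claim: X k * f ∈ Id1
    have hXf_mem : X k * f ∈ homogComp n A (d + 1) := by
      have h1 := (isHomogeneous_X A k).mul ((mem_homogeneousSubmodule _ _).1 hfd)
      rw [Nat.add_comm 1 d] at h1
      exact (mem_homogeneousSubmodule _ _).2 h1
    refine (PlkAux.cls_eq_zero_iff hXf_mem).1 ?_
    set z : quotComp Id1 (d + 1) := cls Id1 (d + 1) (X k * f) with hz
    obtain ⟨B, hBdeg, hBunit⟩ := PlkAux.exists_unit_plk Id d e
    set Fc : Fin μ → quotComp Id d := fun t => cls Id d (monomial (B t) (1 : A)) with hFc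
    have hzdec : z = ∑ a ∈ f.support, coeff a f •
        cls Id1 (d + 1) (X k * monomial a (1 : A)) := by
      have hXf : X k * f = ∑ a ∈ f.support, coeff a f • (X k * monomial a (1 : A)) := by
        conv_lhs => rw [← support_sum_monomial_coeff f]
        rw [Finset.mul_sum]
        refine Finset.sum_congr rfl fun a _ => ?_
        rw [show (monomial a (coeff a f) : MvPolynomial (Fin (n + 1)) A) =
          coeff a f • monomial a 1 from by rw [smul_monomial, smul_eq_mul, mul_one],
          mul_smul_comm]
      rw [hz, hXf, PlkAux.cls_eq_clsLM, map_sum]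
      simp only [map_smul]
      rfl
    have hclsf : cls Id d f = 0 := (PlkAux.cls_eq_zero_iff hfd).2 hf
    have hmono : ∀ v : Fin (μ - 1) → quotComp Id1 (d + 1),
        (∀ t, v t ∈ {w : quotComp Id1 (d + 1) |
          ∃ b : Fin (n + 1) →₀ ℕ, b.degree = d + 1 ∧ w = cls Id1 (d + 1) (monomial b 1)}) →
        e'.det (snocTuple v z) = 0 := by
      intro v hv
      choose B' hB'd hB'v using hv
      have hveq : v = fun t => cls Id1 (d + 1) (monomial (B' t) 1) := funext fun t => hB'v t
      have hdet_eq : e'.det (snocTuple v z) = PlkAux.detSnocLM hμ e' v z :=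
        (PlkAux.detSnocLM_apply hμ e' v z).symm
      have hkey : plk e Fc * PlkAux.detSnocLM hμ e' v z = 0 := by
        have hz2 : PlkAux.detSnocLM hμ e' v z = ∑ a ∈ f.support,
            coeff a f * PlkAux.detSnocLM hμ e' v (cls Id1 (d + 1) (X k * monomial a 1)) := by
          rw [hzdec, map_sum]
          simp only [map_smul, smul_eq_mul]
        rw [hz2, Finset.mul_sum]
        have hterm : ∀ a ∈ f.support,
            plk e Fc * (coeff a f *
              PlkAux.detSnocLM hμ e' v (cls Id1 (d + 1) (X k * monomial a 1)))
            = coeff a f * ∑ t : Fin μ,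
                plk e (Function.update Fc t (cls Id d (monomial a 1))) *
                  PlkAux.detSnocLM hμ e' v (cls Id1 (d + 1) (X k * monomial (B t) 1)) := by
          intro a haf
          have hr := hrel B hBdeg B' hB'd a (PlkAux.support_degree hfd haf) k
          rw [sub_eq_zero] at hr
          rw [← hveq] at hr
          simp only [PlkAux.plk_snoc hμ e' v] at hr
          rw [← hFc] at hr
          rw [mul_left_comm, hr]
        rw [Finset.sum_congr rfl hterm]
        simp only [Finset.mul_sum]
        rw [Finset.sum_comm]
        refine Finset.sum_eq_zero fun t _ => ?_
        have hfac : ∑ a ∈ f.support, coeff a f *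
            (plk e (Function.update Fc t (cls Id d (monomial a 1))) *
              PlkAux.detSnocLM hμ e' v (cls Id1 (d + 1) (X k * monomial (B t) 1)))
            = (∑ a ∈ f.support, coeff a f *
                plk e (Function.update Fc t (cls Id d (monomial a 1)))) *
              PlkAux.detSnocLM hμ e' v (cls Id1 (d + 1) (X k * monomial (B t) 1)) := by
          rw [Finset.sum_mul]
          exact Finset.sum_congr rfl fun a _ => by ring
        rw [hfac]
        have hinner : ∑ a ∈ f.support, coeff a f *
            plk e (Function.update Fc t (cls Id d (monomial a 1))) = 0 := by
          simp only [PlkAux.plk_update e Fc t, ← smul_eq_mul, ← map_smul]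
          rw [← map_sum]
          rw [show (∑ a ∈ f.support, coeff a f • cls Id d (monomial a (1 : A))) =
            cls Id d f from (PlkAux.cls_decomp hfd).symm, hclsf, map_zero]
        rw [hinner, zero_mul]
      rw [hdet_eq]
      exact (IsUnit.mul_right_eq_zero hBunit).1 hkey
    have hall := PlkAux.det_snoc_extend hμ e'
      (PlkAux.span_cls_monomials (N := Id1) (d := d + 1)) hmono
    exact PlkAux.eq_zero_of_forall_det_snoc hμ e' hall

end
end
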